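/- Let p : X → Y be an open continuous surjection between compact Hausdorff spaces such that every fiber of O(p) : O(X) → O(Y) contains more than one point. Then the maps s⁺, s⁻ : O(Y) → O(X), sending λ ∈ O(Y) to the pointwise supremum (respectively, the pointwise infimum) of the fiber O(p)⁻¹(λ), are two continuous sections of O(p) (i.e., O(p) ∘ s⁺ = id = O(p) ∘ s⁻) with disjoint images. -/

import Mathlib

/-- The set of normed, weakly additive, order-preserving functionals on `C(X, ℝ)`. -/
def OF (X : Type*) [TopologicalSpace X] : Set (C(X, ℝ) → ℝ) :=
  {ν | ν 1 = 1 ∧ (∀ (φ : C(X, ℝ)) (c : ℝ), ν (φ + ContinuousMap.const X c) = ν φ + c) ∧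
    ∀ φ ψ : C(X, ℝ), φ ≤ ψ → ν φ ≤ ν ψ}

/-- For `φ ∈ C(X, ℝ)`, the evaluation map `π_φ : O(X) → ℝ`. -/
def piO (X : Type*) [TopologicalSpace X] (φ : C(X, ℝ)) : C(↥(OF X), ℝ) :=
  ⟨fun ν => ν.1 φ, (continuous_apply φ).comp continuous_subtype_val⟩

/-- The monad multiplication `μ_O X : O(O(X)) → O(X)`, `μ_O X (M) (φ) = M (π_φ)`. -/
def muO (X : Type*) [TopologicalSpace X] (M : ↥(OF (↥(OF X)))) : ↥(OF X) := by
  refine ⟨fun φ => M.1 (piO X φ), ?_, ?_, ?_⟩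
  · have h1 : piO X (1 : C(X, ℝ)) = 1 := by
      ext ν; exact ν.2.1
    show M.1 (piO X 1) = 1
    rw [h1]; exact M.2.1
  · intro φ c
    have h : piO X (φ + ContinuousMap.const X c)
        = piO X φ + ContinuousMap.const _ c := by
      ext ν; exact ν.2.2.1 φ c
    show M.1 (piO X (φ + ContinuousMap.const X c)) = M.1 (piO X φ) + c
    rw [h]; exact M.2.2.1 _ c
  · intro φ ψ h
    exact M.2.2.2 _ _ (fun ν => ν.2.2.2 φ ψ h)

/-- The functorial map `O(f) : O(X) → O(Y)`, `O(f)(ν)(φ) = ν(φ ∘ f)`. -/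
def OFmap {X Y : Type*} [TopologicalSpace X] [TopologicalSpace Y] (f : X → Y)
    (hf : Continuous f) (ν : ↥(OF X)) : ↥(OF Y) := by
  refine ⟨fun φ => ν.1 (φ.comp ⟨f, hf⟩), ?_, ?_, ?_⟩
  · show ν.1 ((1 : C(Y, ℝ)).comp ⟨f, hf⟩) = 1
    have h1 : (1 : C(Y, ℝ)).comp ⟨f, hf⟩ = 1 := rfl
    rw [h1]; exact ν.2.1
  · intro φ c
    show ν.1 ((φ + ContinuousMap.const Y c).comp ⟨f, hf⟩) = ν.1 (φ.comp ⟨f, hf⟩) + c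
    have h : (φ + ContinuousMap.const Y c).comp ⟨f, hf⟩
        = φ.comp ⟨f, hf⟩ + ContinuousMap.const X c := rfl
    rw [h]; exact ν.2.2.1 _ c
  · intro φ ψ h
    exact ν.2.2.2 _ _ (fun x => h (f x))

section OFAux

variable {X Y : Type*} [TopologicalSpace X] [CompactSpace X] [T2Space X]
  [TopologicalSpace Y] [CompactSpace Y] [T2Space Y]

theorem isGreatest_fiberSup (p : X → Y) (hc : Continuous p) (hs : Function.Surjective p)
    (φ : C(X, ℝ)) (y : Y) :
    IsGreatest (φ '' (p ⁻¹' {y})) (sSup (φ '' (p ⁻¹' {y}))) := by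
  have hK : IsCompact (p ⁻¹' {y}) := (isClosed_singleton.preimage hc).isCompact
  have hne : (p ⁻¹' {y}).Nonempty := (hs y).imp fun x hx => hx
  exact (hK.image φ.continuous).isGreatest_sSup (hne.image φ)

theorem isLeast_fiberInf (p : X → Y) (hc : Continuous p) (hs : Function.Surjective p)
    (φ : C(X, ℝ)) (y : Y) :
    IsLeast (φ '' (p ⁻¹' {y})) (sInf (φ '' (p ⁻¹' {y}))) := by
  have hK : IsCompact (p ⁻¹' {y}) := (isClosed_singleton.preimage hc).isCompact
  have hne : (p ⁻¹' {y}).Nonempty := (hs y).imp fun x hx => hx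
  exact (hK.image φ.continuous).isLeast_sInf (hne.image φ)

theorem continuous_fiberSup (p : X → Y) (hc : Continuous p) (ho : IsOpenMap p)
    (hs : Function.Surjective p) (φ : C(X, ℝ)) :
    Continuous fun y => sSup (φ '' (p ⁻¹' {y})) := by
  rw [continuous_iff_lower_upperSemicontinuous]
  constructor
  · rw [lowerSemicontinuous_iff_isOpen_preimage]
    intro c
    have heq : (fun y => sSup (φ '' (p ⁻¹' {y}))) ⁻¹' Set.Ioi c = p '' {x | c < φ x} := by
      ext y
      simp only [Set.mem_preimage, Set.mem_Ioi, Set.mem_image, Set.mem_setOf_eq]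
      constructor
      · intro h
        obtain ⟨x, hx, hxe⟩ := (isGreatest_fiberSup p hc hs φ y).1
        exact ⟨x, hxe ▸ h, hx⟩
      · rintro ⟨x, hcx, hxy⟩
        exact lt_of_lt_of_le hcx
          ((isGreatest_fiberSup p hc hs φ y).2 ⟨x, hxy, rfl⟩)
    rw [heq]
    exact ho _ (isOpen_lt continuous_const φ.continuous)
  · rw [upperSemicontinuous_iff_isOpen_preimage]
    intro c
    have heq : (fun y => sSup (φ '' (p ⁻¹' {y}))) ⁻¹' Set.Iio c = (p '' {x | c ≤ φ x})ᶜ := by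
      ext y
      simp only [Set.mem_preimage, Set.mem_Iio, Set.mem_compl_iff, Set.mem_image,
        Set.mem_setOf_eq, not_exists]
      constructor
      · rintro h x ⟨hcx, hxy⟩
        exact absurd (lt_of_le_of_lt
          (le_trans hcx ((isGreatest_fiberSup p hc hs φ y).2 ⟨x, hxy, rfl⟩)) h) (lt_irrefl c)
      · intro h
        obtain ⟨x, hx, hxe⟩ := (isGreatest_fiberSup p hc hs φ y).1
        rw [← hxe]
        by_contra hlt
        exact h x ⟨le_of_not_gt hlt, hx⟩
    rw [heq]
    exact (hc.isClosedMap _ (isClosed_le continuous_const φ.continuous)).isOpen_compl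

theorem continuous_fiberInf (p : X → Y) (hc : Continuous p) (ho : IsOpenMap p)
    (hs : Function.Surjective p) (φ : C(X, ℝ)) :
    Continuous fun y => sInf (φ '' (p ⁻¹' {y})) := by
  rw [continuous_iff_lower_upperSemicontinuous]
  constructor
  · rw [lowerSemicontinuous_iff_isOpen_preimage]
    intro c
    have heq : (fun y => sInf (φ '' (p ⁻¹' {y}))) ⁻¹' Set.Ioi c = (p '' {x | φ x ≤ c})ᶜ := by
      ext y
      simp only [Set.mem_preimage, Set.mem_Ioi, Set.mem_compl_iff, Set.mem_image,
        Set.mem_setOf_eq, not_exists]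
      constructor
      · rintro h x ⟨hcx, hxy⟩
        exact absurd (lt_of_lt_of_le h
          (le_trans ((isLeast_fiberInf p hc hs φ y).2 ⟨x, hxy, rfl⟩) hcx)) (lt_irrefl c)
      · intro h
        obtain ⟨x, hx, hxe⟩ := (isLeast_fiberInf p hc hs φ y).1
        rw [← hxe]
        by_contra hlt
        exact h x ⟨le_of_not_gt hlt, hx⟩
    rw [heq]
    exact (hc.isClosedMap _ (isClosed_le φ.continuous continuous_const)).isOpen_compl
  · rw [upperSemicontinuous_iff_isOpen_preimage]
    intro c
    have heq : (fun y => sInf (φ '' (p ⁻¹' {y}))) ⁻¹' Set.Iio c = p '' {x | φ x < c} := by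
      ext y
      simp only [Set.mem_preimage, Set.mem_Iio, Set.mem_image, Set.mem_setOf_eq]
      constructor
      · intro h
        obtain ⟨x, hx, hxe⟩ := (isLeast_fiberInf p hc hs φ y).1
        exact ⟨x, hxe ▸ h, hx⟩
      · rintro ⟨x, hcx, hxy⟩
        exact lt_of_le_of_lt ((isLeast_fiberInf p hc hs φ y).2 ⟨x, hxy, rfl⟩) hcx
    rw [heq]
    exact ho _ (isOpen_lt φ.continuous continuous_const)

/-- The continuous map `y ↦ max_{p⁻¹(y)} φ`. -/
noncomputable def fiberSupCM (p : X → Y) (hc : Continuous p) (ho : IsOpenMap p)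
    (hs : Function.Surjective p) (φ : C(X, ℝ)) : C(Y, ℝ) :=
  ⟨fun y => sSup (φ '' (p ⁻¹' {y})), continuous_fiberSup p hc ho hs φ⟩

/-- The continuous map `y ↦ min_{p⁻¹(y)} φ`. -/
noncomputable def fiberInfCM (p : X → Y) (hc : Continuous p) (ho : IsOpenMap p)
    (hs : Function.Surjective p) (φ : C(X, ℝ)) : C(Y, ℝ) :=
  ⟨fun y => sInf (φ '' (p ⁻¹' {y})), continuous_fiberInf p hc ho hs φ⟩

theorem fiberSupCM_one (p : X → Y) (hc : Continuous p) (ho : IsOpenMap p)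
    (hs : Function.Surjective p) : fiberSupCM p hc ho hs 1 = 1 := by
  ext y
  show sSup ((1 : C(X, ℝ)) '' (p ⁻¹' {y})) = 1
  have hne : (p ⁻¹' {y}).Nonempty := (hs y).imp fun x hx => hx
  have : (1 : C(X, ℝ)) '' (p ⁻¹' {y}) = {1} := by
    apply Set.Subset.antisymm
    · rintro _ ⟨x, -, rfl⟩; rfl
    · rintro r hr
      obtain ⟨x, hx⟩ := hne
      exact ⟨x, hx, hr.symm⟩
  rw [this, csSup_singleton]

theorem fiberInfCM_one (p : X → Y) (hc : Continuous p) (ho : IsOpenMap p)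
    (hs : Function.Surjective p) : fiberInfCM p hc ho hs 1 = 1 := by
  ext y
  show sInf ((1 : C(X, ℝ)) '' (p ⁻¹' {y})) = 1
  have hne : (p ⁻¹' {y}).Nonempty := (hs y).imp fun x hx => hx
  have : (1 : C(X, ℝ)) '' (p ⁻¹' {y}) = {1} := by
    apply Set.Subset.antisymm
    · rintro _ ⟨x, -, rfl⟩; rfl
    · rintro r hr
      obtain ⟨x, hx⟩ := hne
      exact ⟨x, hx, hr.symm⟩
  rw [this, csInf_singleton]

theorem fiberSupCM_add_const (p : X → Y) (hc : Continuous p) (ho : IsOpenMap p)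
    (hs : Function.Surjective p) (φ : C(X, ℝ)) (c : ℝ) :
    fiberSupCM p hc ho hs (φ + ContinuousMap.const X c)
      = fiberSupCM p hc ho hs φ + ContinuousMap.const Y c := by
  ext y
  show sSup ((φ + ContinuousMap.const X c) '' (p ⁻¹' {y}))
      = sSup (φ '' (p ⁻¹' {y})) + c
  have h1 : (⇑(φ + ContinuousMap.const X c)) '' (p ⁻¹' {y})
      = (fun r => r + c) '' (φ '' (p ⁻¹' {y})) := by
    rw [ContinuousMap.coe_add, ← Set.image_comp]; rfl
  rw [h1]
  have hG := isGreatest_fiberSup p hc hs φ y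
  refine IsGreatest.csSup_eq ⟨⟨_, hG.1, rfl⟩, ?_⟩
  rintro _ ⟨r, hr, rfl⟩
  exact add_le_add (hG.2 hr) le_rfl

theorem fiberInfCM_add_const (p : X → Y) (hc : Continuous p) (ho : IsOpenMap p)
    (hs : Function.Surjective p) (φ : C(X, ℝ)) (c : ℝ) :
    fiberInfCM p hc ho hs (φ + ContinuousMap.const X c)
      = fiberInfCM p hc ho hs φ + ContinuousMap.const Y c := by
  ext y
  show sInf ((φ + ContinuousMap.const X c) '' (p ⁻¹' {y}))
      = sInf (φ '' (p ⁻¹' {y})) + c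
  have h1 : (⇑(φ + ContinuousMap.const X c)) '' (p ⁻¹' {y})
      = (fun r => r + c) '' (φ '' (p ⁻¹' {y})) := by
    rw [ContinuousMap.coe_add, ← Set.image_comp]; rfl
  rw [h1]
  have hG := isLeast_fiberInf p hc hs φ y
  refine IsLeast.csInf_eq ⟨⟨_, hG.1, rfl⟩, ?_⟩
  rintro _ ⟨r, hr, rfl⟩
  exact add_le_add (hG.2 hr) le_rfl

theorem fiberSupCM_mono (p : X → Y) (hc : Continuous p) (ho : IsOpenMap p)
    (hs : Function.Surjective p) {φ ψ : C(X, ℝ)} (h : φ ≤ ψ) :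
    fiberSupCM p hc ho hs φ ≤ fiberSupCM p hc ho hs ψ := by
  intro y
  obtain ⟨x, hx, hxe⟩ := (isGreatest_fiberSup p hc hs φ y).1
  show sSup (φ '' (p ⁻¹' {y})) ≤ sSup (ψ '' (p ⁻¹' {y}))
  rw [← hxe]
  exact le_trans (h x) ((isGreatest_fiberSup p hc hs ψ y).2 ⟨x, hx, rfl⟩)

theorem fiberInfCM_mono (p : X → Y) (hc : Continuous p) (ho : IsOpenMap p)
    (hs : Function.Surjective p) {φ ψ : C(X, ℝ)} (h : φ ≤ ψ) :
    fiberInfCM p hc ho hs φ ≤ fiberInfCM p hc ho hs ψ := by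
  intro y
  obtain ⟨x, hx, hxe⟩ := (isLeast_fiberInf p hc hs ψ y).1
  show sInf (φ '' (p ⁻¹' {y})) ≤ sInf (ψ '' (p ⁻¹' {y}))
  rw [← hxe]
  exact le_trans ((isLeast_fiberInf p hc hs φ y).2 ⟨x, hx, rfl⟩) (h x)

theorem fiberSupCM_comp (p : X → Y) (hc : Continuous p) (ho : IsOpenMap p)
    (hs : Function.Surjective p) (ψ : C(Y, ℝ)) :
    fiberSupCM p hc ho hs (ψ.comp ⟨p, hc⟩) = ψ := by
  ext y
  show sSup ((fun x => ψ (p x)) '' (p ⁻¹' {y})) = ψ y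
  have : (fun x => ψ (p x)) '' (p ⁻¹' {y}) = {ψ y} := by
    apply Set.Subset.antisymm
    · rintro _ ⟨x, hx, rfl⟩
      simp only [Set.mem_preimage, Set.mem_singleton_iff] at hx ⊢
      rw [hx]
    · rintro r hr
      obtain ⟨x, hx⟩ := hs y
      exact ⟨x, by simp [hx], by simp only [Set.mem_singleton_iff] at hr; simp [hx, hr]⟩
  rw [this, csSup_singleton]

theorem fiberInfCM_comp (p : X → Y) (hc : Continuous p) (ho : IsOpenMap p)
    (hs : Function.Surjective p) (ψ : C(Y, ℝ)) :
    fiberInfCM p hc ho hs (ψ.comp ⟨p, hc⟩) = ψ := by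
  ext y
  show sInf ((fun x => ψ (p x)) '' (p ⁻¹' {y})) = ψ y
  have : (fun x => ψ (p x)) '' (p ⁻¹' {y}) = {ψ y} := by
    apply Set.Subset.antisymm
    · rintro _ ⟨x, hx, rfl⟩
      simp only [Set.mem_preimage, Set.mem_singleton_iff] at hx ⊢
      rw [hx]
    · rintro r hr
      obtain ⟨x, hx⟩ := hs y
      exact ⟨x, by simp [hx], by simp only [Set.mem_singleton_iff] at hr; simp [hx, hr]⟩
  rw [this, csInf_singleton]

/-- The section `s⁺ : O(Y) → O(X)`, `s⁺(λ)(φ) = λ(y ↦ max_{p⁻¹(y)} φ)`. -/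
noncomputable def sPlusF (p : X → Y) (hc : Continuous p) (ho : IsOpenMap p)
    (hs : Function.Surjective p) (lam : ↥(OF Y)) : ↥(OF X) := by
  refine ⟨fun φ => lam.1 (fiberSupCM p hc ho hs φ), ?_, ?_, ?_⟩
  · show lam.1 (fiberSupCM p hc ho hs 1) = 1
    rw [fiberSupCM_one]; exact lam.2.1
  · intro φ c
    show lam.1 (fiberSupCM p hc ho hs (φ + ContinuousMap.const X c)) = _
    rw [fiberSupCM_add_const]; exact lam.2.2.1 _ c
  · intro φ ψ h
    exact lam.2.2.2 _ _ (fiberSupCM_mono p hc ho hs h)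

/-- The section `s⁻ : O(Y) → O(X)`, `s⁻(λ)(φ) = λ(y ↦ min_{p⁻¹(y)} φ)`. -/
noncomputable def sMinusF (p : X → Y) (hc : Continuous p) (ho : IsOpenMap p)
    (hs : Function.Surjective p) (lam : ↥(OF Y)) : ↥(OF X) := by
  refine ⟨fun φ => lam.1 (fiberInfCM p hc ho hs φ), ?_, ?_, ?_⟩
  · show lam.1 (fiberInfCM p hc ho hs 1) = 1
    rw [fiberInfCM_one]; exact lam.2.1
  · intro φ c
    show lam.1 (fiberInfCM p hc ho hs (φ + ContinuousMap.const X c)) = _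
    rw [fiberInfCM_add_const]; exact lam.2.2.1 _ c
  · intro φ ψ h
    exact lam.2.2.2 _ _ (fiberInfCM_mono p hc ho hs h)

theorem sPlusF_section (p : X → Y) (hc : Continuous p) (ho : IsOpenMap p)
    (hs : Function.Surjective p) (lam : ↥(OF Y)) :
    OFmap p hc (sPlusF p hc ho hs lam) = lam := by
  apply Subtype.ext
  funext ψ
  show lam.1 (fiberSupCM p hc ho hs (ψ.comp ⟨p, hc⟩)) = lam.1 ψ
  rw [fiberSupCM_comp]

theorem sMinusF_section (p : X → Y) (hc : Continuous p) (ho : IsOpenMap p)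
    (hs : Function.Surjective p) (lam : ↥(OF Y)) :
    OFmap p hc (sMinusF p hc ho hs lam) = lam := by
  apply Subtype.ext
  funext ψ
  show lam.1 (fiberInfCM p hc ho hs (ψ.comp ⟨p, hc⟩)) = lam.1 ψ
  rw [fiberInfCM_comp]

theorem fiber_le_sPlusF (p : X → Y) (hc : Continuous p) (ho : IsOpenMap p)
    (hs : Function.Surjective p) {lam : ↥(OF Y)} {ν : ↥(OF X)}
    (hν : OFmap p hc ν = lam) (φ : C(X, ℝ)) :
    ν.1 φ ≤ (sPlusF p hc ho hs lam).1 φ := by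
  have hle : φ ≤ (fiberSupCM p hc ho hs φ).comp ⟨p, hc⟩ := by
    intro x
    exact (isGreatest_fiberSup p hc hs φ (p x)).2 ⟨x, rfl, rfl⟩
  calc ν.1 φ ≤ ν.1 ((fiberSupCM p hc ho hs φ).comp ⟨p, hc⟩) := ν.2.2.2 _ _ hle
    _ = (OFmap p hc ν).1 (fiberSupCM p hc ho hs φ) := rfl
    _ = lam.1 (fiberSupCM p hc ho hs φ) := by rw [hν]
    _ = (sPlusF p hc ho hs lam).1 φ := rfl

theorem sMinusF_le_fiber (p : X → Y) (hc : Continuous p) (ho : IsOpenMap p)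
    (hs : Function.Surjective p) {lam : ↥(OF Y)} {ν : ↥(OF X)}
    (hν : OFmap p hc ν = lam) (φ : C(X, ℝ)) :
    (sMinusF p hc ho hs lam).1 φ ≤ ν.1 φ := by
  have hle : (fiberInfCM p hc ho hs φ).comp ⟨p, hc⟩ ≤ φ := by
    intro x
    exact (isLeast_fiberInf p hc hs φ (p x)).2 ⟨x, rfl, rfl⟩
  calc (sMinusF p hc ho hs lam).1 φ = lam.1 (fiberInfCM p hc ho hs φ) := rfl
    _ = (OFmap p hc ν).1 (fiberInfCM p hc ho hs φ) := by rw [hν]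
    _ = ν.1 ((fiberInfCM p hc ho hs φ).comp ⟨p, hc⟩) := rfl
    _ ≤ ν.1 φ := ν.2.2.2 _ _ hle

theorem sPlusF_eq_sSup (p : X → Y) (hc : Continuous p) (ho : IsOpenMap p)
    (hs : Function.Surjective p) (lam : ↥(OF Y)) :
    (sPlusF p hc ho hs lam).1 = fun φ : C(X, ℝ) =>
      sSup ((fun ν : ↥(OF X) => ν.1 φ) '' (OFmap p hc ⁻¹' {lam})) := by
  funext φ
  have hmem : (sPlusF p hc ho hs lam).1 φ
      ∈ (fun ν : ↥(OF X) => ν.1 φ) '' (OFmap p hc ⁻¹' {lam}) :=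
    ⟨sPlusF p hc ho hs lam, sPlusF_section p hc ho hs lam, rfl⟩
  have hub : ∀ r ∈ (fun ν : ↥(OF X) => ν.1 φ) '' (OFmap p hc ⁻¹' {lam}),
      r ≤ (sPlusF p hc ho hs lam).1 φ := by
    rintro _ ⟨ν, hν, rfl⟩
    exact fiber_le_sPlusF p hc ho hs hν φ
  exact (IsGreatest.csSup_eq ⟨hmem, hub⟩).symm

theorem sMinusF_eq_sInf (p : X → Y) (hc : Continuous p) (ho : IsOpenMap p)
    (hs : Function.Surjective p) (lam : ↥(OF Y)) :
    (sMinusF p hc ho hs lam).1 = fun φ : C(X, ℝ) =>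
      sInf ((fun ν : ↥(OF X) => ν.1 φ) '' (OFmap p hc ⁻¹' {lam})) := by
  funext φ
  have hmem : (sMinusF p hc ho hs lam).1 φ
      ∈ (fun ν : ↥(OF X) => ν.1 φ) '' (OFmap p hc ⁻¹' {lam}) :=
    ⟨sMinusF p hc ho hs lam, sMinusF_section p hc ho hs lam, rfl⟩
  have hlb : ∀ r ∈ (fun ν : ↥(OF X) => ν.1 φ) '' (OFmap p hc ⁻¹' {lam}),
      (sMinusF p hc ho hs lam).1 φ ≤ r := by
    rintro _ ⟨ν, hν, rfl⟩
    exact sMinusF_le_fiber p hc ho hs hν φ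
  exact (IsLeast.csInf_eq ⟨hmem, hlb⟩).symm

end OFAux

/-- Let `p : X → Y` be an open continuous surjection of compact Hausdorff spaces such
that every fiber of `O(p)` has more than one point. Then the maps sending `λ ∈ O(Y)` to
the pointwise supremum (resp. infimum) of the fiber `O(p)⁻¹(λ)` are two continuous
sections of `O(p)` with disjoint images. -/
theorem OFmap_two_disjoint_sections {X Y : Type*} [TopologicalSpace X] [CompactSpace X]
    [T2Space X] [TopologicalSpace Y] [CompactSpace Y] [T2Space Y]
    (p : X → Y) (hc : Continuous p) (ho : IsOpenMap p) (hs : Function.Surjective p)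
    (hfib : ∀ lam : ↥(OF Y), ∃ ν₁ ν₂ : ↥(OF X),
      ν₁ ≠ ν₂ ∧ OFmap p hc ν₁ = lam ∧ OFmap p hc ν₂ = lam) :
    ∃ sPlus sMinus : ↥(OF Y) → ↥(OF X),
      (∀ lam : ↥(OF Y), (sPlus lam).1 = fun φ : C(X, ℝ) =>
        sSup ((fun ν : ↥(OF X) => ν.1 φ) '' (OFmap p hc ⁻¹' {lam}))) ∧
      (∀ lam : ↥(OF Y), (sMinus lam).1 = fun φ : C(X, ℝ) =>
        sInf ((fun ν : ↥(OF X) => ν.1 φ) '' (OFmap p hc ⁻¹' {lam}))) ∧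
      Continuous sPlus ∧ Continuous sMinus ∧
      OFmap p hc ∘ sPlus = id ∧ OFmap p hc ∘ sMinus = id ∧
      Set.range sPlus ∩ Set.range sMinus = ∅ := by
  refine ⟨sPlusF p hc ho hs, sMinusF p hc ho hs, sPlusF_eq_sSup p hc ho hs,
    sMinusF_eq_sInf p hc ho hs, ?_, ?_, ?_, ?_, ?_⟩
  · apply Continuous.subtype_mk
    apply continuous_pi
    intro φ
    exact (continuous_apply (fiberSupCM p hc ho hs φ)).comp continuous_subtype_val
  · apply Continuous.subtype_mk
    apply continuous_pi
    intro φ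
    exact (continuous_apply (fiberInfCM p hc ho hs φ)).comp continuous_subtype_val
  · funext lam; exact sPlusF_section p hc ho hs lam
  · funext lam; exact sMinusF_section p hc ho hs lam
  · rw [Set.eq_empty_iff_forall_notMem]
    rintro ν ⟨⟨lam₁, rfl⟩, ⟨lam₂, hν₂⟩⟩
    have hlam : lam₂ = lam₁ := by
      have h1 := sPlusF_section p hc ho hs lam₁
      have h2 := sMinusF_section p hc ho hs lam₂
      rw [hν₂] at h2
      rw [← h2, h1]
    subst hlam
    obtain ⟨ν₁, ν₂, hne, h₁, h₂⟩ := hfib lam₂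
    apply hne
    have key : ∀ ν' : ↥(OF X), OFmap p hc ν' = lam₂ →
        ν' = sPlusF p hc ho hs lam₂ := by
      intro ν' hν'
      apply Subtype.ext
      funext φ
      refine le_antisymm (fiber_le_sPlusF p hc ho hs hν' φ) ?_
      calc (sPlusF p hc ho hs lam₂).1 φ = (sMinusF p hc ho hs lam₂).1 φ := by rw [hν₂]
        _ ≤ ν'.1 φ := sMinusF_le_fiber p hc ho hs hν' φ
    rw [key ν₁ h₁, key ν₂ h₂]
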